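/- If the edge set of the complete graph K_5 is partitioned into two disjoint triangle-free sets of edges G and R, then each of G and R is a 5-cycle through all 5 vertices. In particular, the drawn K_5 is the unique draw position of 5-Sim up to isomorphism. -/

import Mathlib

/-- The set of valid (non-loop) edges of the complete graph on `Fin n`. -/
def simEdges (n : ℕ) : Finset (Sym2 (Fin n)) :=
  Finset.univ.filter (fun e => ¬ e.IsDiag)

/-- An edge set `S` contains a triangle: three edges of `S` spanned by three
distinct vertices. -/
def HasTriangle {n : ℕ} (S : Finset (Sym2 (Fin n))) : Prop :=
  ∃ a b c : Fin n, a ≠ b ∧ a ≠ c ∧ b ≠ c ∧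
    s(a, b) ∈ S ∧ s(a, c) ∈ S ∧ s(b, c) ∈ S

/-- The uncolored edges, given the two players' edge sets. -/
def avail {n : ℕ} (A B : Finset (Sym2 (Fin n))) : Finset (Sym2 (Fin n)) :=
  simEdges n \ (A ∪ B)

/-- `MoverWins own opp` : in the game of n-Sim (players alternately claim an
uncolored edge of `K n`, and whoever first has a triangle in their own edges
loses), the player about to move, whose already-claimed edges are `own` while
the opponent's are `opp`, has a winning strategy.

The mover wins iff they can claim some uncolored edge `e` not creating a
triangle in their own color, so that afterwards the opponent still has to move
(there is an uncolored edge left; otherwise the game is a draw), and every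
reply `f` of the opponent either completes a triangle in the opponent's color
(so the opponent loses) or leads to a position where the original mover again
wins. -/
inductive MoverWins {n : ℕ} : Finset (Sym2 (Fin n)) → Finset (Sym2 (Fin n)) → Prop where
  | step (own opp : Finset (Sym2 (Fin n))) (e : Sym2 (Fin n))
      (he : e ∈ avail own opp)
      (hsafe : ¬ HasTriangle (insert e own))
      (hne : (avail opp (insert e own)).Nonempty)
      (hreplies : ∀ f ∈ avail opp (insert e own), ¬ HasTriangle (insert f opp) →
        MoverWins (insert e own) (insert f opp)) :
      MoverWins own opp

/-- `NonMoverWins own opp` : the player NOT about to move (the one whose edges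
are `opp`) has a winning strategy: there is at least one uncolored edge (the
mover must move), and every non-losing move of the mover leads to a position
won by the (new) mover, i.e. by the original non-mover. -/
def NonMoverWins {n : ℕ} (own opp : Finset (Sym2 (Fin n))) : Prop :=
  (avail own opp).Nonempty ∧
    ∀ e ∈ avail own opp, ¬ HasTriangle (insert e own) →
      MoverWins opp (insert e own)

/-- The green edges of a drawn `K₅` on the five distinct vertices
`v 0, …, v 4`: the pentagon `v i — v (i+1)`. -/
def greenK5 {n : ℕ} (v : Fin 5 → Fin n) : Finset (Sym2 (Fin n)) :=
  Finset.univ.image (fun i : Fin 5 => s(v i, v (i + 1)))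

/-- The red edges of a drawn `K₅` on the five distinct vertices
`v 0, …, v 4`: the complementary pentagram `v i — v (i+2)`. -/
def redK5 {n : ℕ} (v : Fin 5 → Fin n) : Finset (Sym2 (Fin n)) :=
  Finset.univ.image (fun i : Fin 5 => s(v i, v (i + 2)))

/-- `S` is a 5-cycle through all five vertices of `K₅`. -/
def IsPentagon (S : Finset (Sym2 (Fin 5))) : Prop :=
  ∃ v : Fin 5 → Fin 5, Function.Bijective v ∧
    S = Finset.univ.image (fun i : Fin 5 => s(v i, v (i + 1)))


/-- The ten edges of `K₅`, indexed by `Fin 10`. -/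
def edgeE : Fin 10 → Sym2 (Fin 5) :=
  ![s(0,1), s(0,2), s(0,3), s(0,4), s(1,2), s(1,3), s(1,4), s(2,3), s(2,4), s(3,4)]

/-- Index of the edge `s(a,b)` (junk on the diagonal). -/
def eIdx : Fin 5 → Fin 5 → Fin 10 :=
  ![![0,0,1,2,3], ![0,0,4,5,6], ![1,4,0,7,8], ![2,5,7,0,9], ![3,6,8,9,0]]

lemma edgeE_eIdx : ∀ a b : Fin 5, a ≠ b → edgeE (eIdx a b) = s(a,b) := by decide

lemma edgeE_inj : Function.Injective edgeE := by decide

lemma edgeE_surj : ∀ e ∈ simEdges 5, ∃ i, edgeE i = e := by decide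

lemma edgeE_mem : ∀ i, edgeE i ∈ simEdges 5 := by decide

/-- Triangle predicate on a bitmask of edge indices. -/
def Tri10B (m : ℕ) : Prop :=
  ∃ a b c : Fin 5, a ≠ b ∧ a ≠ c ∧ b ≠ c ∧
    m.testBit (eIdx a b).val ∧ m.testBit (eIdx a c).val ∧ m.testBit (eIdx b c).val

instance (m : ℕ) : Decidable (Tri10B m) := by unfold Tri10B; infer_instance

/-- Bitmasks of the twelve pentagons. -/
def pentMasks : List ℕ := [220, 234, 316, 358, 425, 453, 570, 598, 665, 707, 789, 803]

set_option maxRecDepth 10000 in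
set_option maxHeartbeats 4000000 in
lemma mainB : ∀ m : Fin 1024, ¬ Tri10B m.val → ¬ Tri10B (1023 ^^^ m.val) →
    m.val ∈ pentMasks := by decide

def ofBits : List Bool → ℕ
  | [] => 0
  | b :: l => Nat.bit b (ofBits l)

lemma ofBits_testBit : ∀ (l : List Bool) (k : ℕ), (ofBits l).testBit k = l.getD k false := by
  intro l
  induction l with
  | nil => intro k; simp [ofBits]
  | cons b l ih =>
    intro k
    cases k with
    | zero => simp [ofBits, Nat.testBit_bit_zero]
    | succ k => simp [ofBits, Nat.testBit_bit_succ, ih]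

lemma ofBits_lt : ∀ l : List Bool, ofBits l < 2 ^ l.length := by
  intro l
  induction l with
  | nil => simp [ofBits]
  | cons b l ih =>
    have : ofBits (b :: l) = 2 * ofBits l + b.toNat := by
      cases b <;> simp [ofBits, Nat.bit]
    rw [this]
    cases b <;> simp only [Bool.toNat] <;> simp [pow_succ] <;> omega

/-- Membership bit list of an edge-index set. -/
def bitsOf (T : Finset (Fin 10)) : List Bool :=
  [decide ((0 : Fin 10) ∈ T), decide ((1 : Fin 10) ∈ T), decide ((2 : Fin 10) ∈ T),
   decide ((3 : Fin 10) ∈ T), decide ((4 : Fin 10) ∈ T), decide ((5 : Fin 10) ∈ T),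
   decide ((6 : Fin 10) ∈ T), decide ((7 : Fin 10) ∈ T), decide ((8 : Fin 10) ∈ T),
   decide ((9 : Fin 10) ∈ T)]

def maskOf (T : Finset (Fin 10)) : ℕ := ofBits (bitsOf T)

lemma maskOf_lt (T : Finset (Fin 10)) : maskOf T < 1024 := by
  have := ofBits_lt (bitsOf T)
  simpa [bitsOf, maskOf] using this

lemma testBit_maskOf (T : Finset (Fin 10)) (j : Fin 10) :
    (maskOf T).testBit j.val = decide (j ∈ T) := by
  rw [maskOf, ofBits_testBit]
  fin_cases j <;> rfl

lemma testBit_maskOf_compl (T : Finset (Fin 10)) (j : Fin 10) :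
    (1023 ^^^ maskOf T).testBit j.val = decide (j ∈ Tᶜ) := by
  rw [Nat.testBit_xor, testBit_maskOf]
  have h1023 : Nat.testBit 1023 j.val = true := by fin_cases j <;> rfl
  rw [h1023]
  by_cases h : j ∈ T <;> simp [h]

lemma tri_maskOf (T : Finset (Fin 10)) : Tri10B (maskOf T) ↔
    (∃ a b c : Fin 5, a ≠ b ∧ a ≠ c ∧ b ≠ c ∧
      eIdx a b ∈ T ∧ eIdx a c ∈ T ∧ eIdx b c ∈ T) := by
  unfold Tri10B
  refine exists_congr fun a => exists_congr fun b => exists_congr fun c => ?_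
  simp [testBit_maskOf]

lemma tri_maskOf_compl (T : Finset (Fin 10)) : Tri10B (1023 ^^^ maskOf T) ↔
    (∃ a b c : Fin 5, a ≠ b ∧ a ≠ c ∧ b ≠ c ∧
      eIdx a b ∈ Tᶜ ∧ eIdx a c ∈ Tᶜ ∧ eIdx b c ∈ Tᶜ) := by
  unfold Tri10B
  refine exists_congr fun a => exists_congr fun b => exists_congr fun c => ?_
  simp only [testBit_maskOf_compl]
  simp

lemma maskOf_inj {T S : Finset (Fin 10)} (h : maskOf T = maskOf S) : T = S := by
  ext j
  have := congrArg (fun n => Nat.testBit n j.val) h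
  simp only [testBit_maskOf] at this
  exact decide_eq_decide.mp this

lemma mem_image_edgeE (T : Finset (Fin 10)) {a b : Fin 5} (h : a ≠ b) :
    s(a,b) ∈ T.image edgeE ↔ eIdx a b ∈ T := by
  rw [Finset.mem_image]
  constructor
  · rintro ⟨i, hi, hEi⟩
    rwa [← edgeE_inj (hEi.trans (edgeE_eIdx a b h).symm)]
  · intro h'
    exact ⟨_, h', edgeE_eIdx a b h⟩

lemma tri_iff (T : Finset (Fin 10)) : HasTriangle (T.image edgeE) ↔ Tri10B (maskOf T) := by
  rw [tri_maskOf]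
  unfold HasTriangle
  refine exists_congr fun a => exists_congr fun b => exists_congr fun c => ?_
  constructor
  · rintro ⟨h1, h2, h3, m1, m2, m3⟩
    exact ⟨h1, h2, h3, (mem_image_edgeE T h1).1 m1, (mem_image_edgeE T h2).1 m2,
      (mem_image_edgeE T h3).1 m3⟩
  · rintro ⟨h1, h2, h3, m1, m2, m3⟩
    exact ⟨h1, h2, h3, (mem_image_edgeE T h1).2 m1, (mem_image_edgeE T h2).2 m2,
      (mem_image_edgeE T h3).2 m3⟩

lemma sdiff_image (T : Finset (Fin 10)) :
    simEdges 5 \ T.image edgeE = Tᶜ.image edgeE := by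
  ext e
  simp only [Finset.mem_sdiff, Finset.mem_image, Finset.mem_compl]
  constructor
  · rintro ⟨he, hne⟩
    obtain ⟨i, rfl⟩ := edgeE_surj e he
    exact ⟨i, fun hi => hne ⟨i, hi, rfl⟩, rfl⟩
  · rintro ⟨i, hi, rfl⟩
    refine ⟨edgeE_mem i, ?_⟩
    rintro ⟨j, hj, hje⟩
    exact hi (edgeE_inj hje ▸ hj)

/-- The twelve pentagons as edge-index sets, ordered to match `pentMasks`. -/
def pentSets : List (Finset (Fin 10)) := [({2,3,4,6,7} : Finset (Fin 10)), ({1,3,5,6,7} : Finset (Fin 10)), ({2,3,4,5,8} : Finset (Fin 10)), ({1,2,5,6,8} : Finset (Fin 10)), ({0,3,5,7,8} : Finset (Fin 10)), ({0,2,6,7,8} : Finset (Fin 10)), ({1,3,4,5,9} : Finset (Fin 10)), ({1,2,4,6,9} : Finset (Fin 10)), ({0,3,4,7,9} : Finset (Fin 10)), ({0,1,6,7,9} : Finset (Fin 10)), ({0,2,4,8,9} : Finset (Fin 10)), ({0,1,5,8,9} : Finset (Fin 10))]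

lemma maskOf_pentSets : pentSets.map maskOf = pentMasks := by decide

set_option maxRecDepth 10000 in
lemma pent_of_mask {T : Finset (Fin 10)} (h : maskOf T ∈ pentMasks) :
    IsPentagon (T.image edgeE) := by
  rw [← maskOf_pentSets] at h
  simp only [pentSets, List.map, List.mem_cons, List.not_mem_nil, or_false] at h
  rcases h with h|h|h|h|h|h|h|h|h|h|h|h <;> rw [maskOf_inj h] <;> clear h
  · exact ⟨![0,3,2,1,4], by decide, by decide⟩
  · exact ⟨![0,2,3,1,4], by decide, by decide⟩
  · exact ⟨![0,3,1,2,4], by decide, by decide⟩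
  · exact ⟨![0,2,4,1,3], by decide, by decide⟩
  · exact ⟨![0,1,3,2,4], by decide, by decide⟩
  · exact ⟨![0,1,4,2,3], by decide, by decide⟩
  · exact ⟨![0,2,1,3,4], by decide, by decide⟩
  · exact ⟨![0,2,1,4,3], by decide, by decide⟩
  · exact ⟨![0,1,2,3,4], by decide, by decide⟩
  · exact ⟨![0,1,4,3,2], by decide, by decide⟩
  · exact ⟨![0,1,2,4,3], by decide, by decide⟩
  · exact ⟨![0,1,3,4,2], by decide, by decide⟩

/-- If the edge set of `K₅` is partitioned into two disjoint triangle-free edge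
sets `G` and `R`, then each of them is a 5-cycle through all five vertices:
the drawn `K₅` is the unique draw position of 5-Sim up to isomorphism. -/
theorem K5_triangleFree_partition_is_pentagons (G R : Finset (Sym2 (Fin 5)))
    (hd : Disjoint G R) (hu : G ∪ R = simEdges 5)
    (hG : ¬ HasTriangle G) (hR : ¬ HasTriangle R) :
    IsPentagon G ∧ IsPentagon R := by
  have hGsub : G ⊆ simEdges 5 := hu ▸ Finset.subset_union_left
  have hR' : R = simEdges 5 \ G := by
    rw [← hu, Finset.union_sdiff_cancel_left hd]
  set T : Finset (Fin 10) := Finset.univ.filter (fun i => edgeE i ∈ G) with hT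
  have hGT : G = T.image edgeE := by
    ext e
    simp only [hT, Finset.mem_image, Finset.mem_filter, Finset.mem_univ, true_and]
    constructor
    · intro he
      obtain ⟨i, rfl⟩ := edgeE_surj e (hGsub he)
      exact ⟨i, he, rfl⟩
    · rintro ⟨i, hi, rfl⟩
      exact hi
  have hRT : R = Tᶜ.image edgeE := by rw [hR', hGT, sdiff_image]
  have hG2 : ¬ Tri10B (maskOf T) := fun h => hG (hGT ▸ (tri_iff T).2 h)
  have hR2' : ¬ HasTriangle (Tᶜ.image edgeE) := hRT ▸ hR
  have hR2 : ¬ Tri10B (1023 ^^^ maskOf T) := by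
    rw [tri_maskOf_compl]
    rw [tri_iff, tri_maskOf] at hR2'
    exact hR2'
  have hmem : maskOf T ∈ pentMasks :=
    mainB ⟨maskOf T, maskOf_lt T⟩ hG2 hR2
  have hx : maskOf Tᶜ = 1023 ^^^ maskOf T := by
    apply Nat.eq_of_testBit_eq
    intro k
    by_cases hk : k < 10
    · have := testBit_maskOf Tᶜ ⟨k, hk⟩
      have h2 := testBit_maskOf_compl T ⟨k, hk⟩
      simp only at this h2
      rw [this, h2]
    · have hge : (1024 : ℕ) ≤ 2 ^ k := by
        calc (1024 : ℕ) = 2 ^ 10 := rfl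
          _ ≤ 2 ^ k := Nat.pow_le_pow_right (by norm_num) (le_of_not_gt hk)
      have h1 : (maskOf Tᶜ).testBit k = false :=
        Nat.testBit_lt_two_pow (lt_of_lt_of_le (maskOf_lt Tᶜ) hge)
      have hlt : 1023 ^^^ maskOf T < 1024 :=
        Nat.xor_lt_two_pow (n := 10) (by norm_num) (maskOf_lt T)
      have h2 : (1023 ^^^ maskOf T).testBit k = false :=
        Nat.testBit_lt_two_pow (lt_of_lt_of_le hlt hge)
      rw [h1, h2]
  have hmemC : maskOf Tᶜ ∈ pentMasks := by
    have hy : (1023 : ℕ) ^^^ maskOf Tᶜ = maskOf T := by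
      rw [hx, ← Nat.xor_assoc]
      simp
    refine mainB ⟨maskOf Tᶜ, maskOf_lt Tᶜ⟩ ?_ ?_
    · show ¬ Tri10B (maskOf Tᶜ)
      rw [hx]; exact hR2
    · show ¬ Tri10B (1023 ^^^ maskOf Tᶜ)
      rw [hy]; exact hG2
  exact ⟨hGT ▸ pent_of_mask hmem, hRT ▸ pent_of_mask hmemC⟩
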